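/- Let k be a totally ordered rational tropical semifield and let A be an n×n matrix over k such that all diagonal entries A_{ii} equal 0 (the unity of k) and the tropical determinant det(A) = ⊕_{s ∈ S_n} A_{1 s(1)} ⊙ ⋯ ⊙ A_{n s(n)} equals 0. Then the tropical matrix powers satisfy A^{⊙n} = A^{⊙(n−1)}. -/

import Mathlib

/-! # Tropical semifields and tropical modules -/

/-- A tropical semifield: a commutative semiring with idempotent addition
(`⊕` is `+`, `⊙` is `*`, the zero element `−∞` is `0`, the unity is `1`)
in which every nonzero element has a multiplicative inverse. -/
class TropSemifield (k : Type*) extends CommSemiring k where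
  add_idem : ∀ a : k, a + a = a
  exists_inv : ∀ a : k, a ≠ 0 → ∃ b : k, a * b = 1

/-- A tropical semigroup: commutative idempotent monoid, written additively
(the zero element is `−∞`). -/
class TropSemigroup (M : Type*) extends AddCommMonoid M where
  add_idem : ∀ v : M, v + v = v

/-- A module over a tropical semifield. -/
class TropModule (k : Type*) (M : Type*) [TropSemifield k] [TropSemigroup M] extends
    SMul k M where
  mul_smul : ∀ (a b : k) (v : M), (a * b) • v = a • b • v
  one_smul : ∀ v : M, (1 : k) • v = v
  add_smul : ∀ (a b : k) (v : M), (a + b) • v = a • v + b • v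
  smul_add : ∀ (a : k) (v w : M), a • (v + w) = a • v + a • w
  zero_smul : ∀ v : M, (0 : k) • v = 0
  smul_zero : ∀ a : k, a • (0 : M) = 0

/-- The canonical partial order `v ≤ w ↔ v ⊕ w = w`. -/
def tle {M : Type*} [Add M] (v w : M) : Prop := v + w = w

/-- Strict version of the canonical order. -/
def tlt {M : Type*} [Add M] (v w : M) : Prop := tle v w ∧ v ≠ w

/-- The canonical order of `k` is total. -/
def TotallyOrderedTSF (k : Type*) [TropSemifield k] : Prop :=
  ∀ a b : k, tle a b ∨ tle b a

/-- Every nonempty subset of `k` admits an infimum. -/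
def QuasiCompleteTSF (k : Type*) [TropSemifield k] : Prop :=
  ∀ S : Set k, S.Nonempty →
    ∃ c : k, (∀ x ∈ S, tle c x) ∧ ∀ d : k, (∀ x ∈ S, tle d x) → tle d c

/-- `k` is rational: `m`-th roots exist and `k` has no maximum element. -/
def RationalTSF (k : Type*) [TropSemifield k] : Prop :=
  (∀ (a : k) (m : ℕ), m ≠ 0 → ∃ b : k, b ^ m = a) ∧ ∀ a : k, ∃ b : k, tlt a b

instance (priority := 100) TropSemifield.toTropSemigroup (k : Type*) [TropSemifield k] :
    TropSemigroup k :=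
  { (inferInstance : AddCommMonoid k) with add_idem := TropSemifield.add_idem }

instance TropModule.self (k : Type*) [TropSemifield k] : TropModule k k :=
  { (inferInstance : SMul k k) with
    mul_smul := fun a b v => mul_assoc a b v
    one_smul := fun v => one_mul v
    add_smul := fun a b v => add_mul a b v
    smul_add := fun a v w => mul_add a v w
    zero_smul := fun v => zero_mul v
    smul_zero := fun a => mul_zero a }

instance TropSemigroup.pi {ι : Type*} (M : Type*) [TropSemigroup M] :
    TropSemigroup (ι → M) :=
  { Pi.addCommMonoid with add_idem := fun v => funext fun i => TropSemigroup.add_idem (v i) }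

instance TropModule.pi (k : Type*) {ι : Type*} (M : Type*) [TropSemifield k] [TropSemigroup M]
    [TropModule k M] : TropModule k (ι → M) where
  smul a v := fun i => a • v i
  mul_smul a b v := funext fun i => TropModule.mul_smul a b (v i)
  one_smul v := funext fun i => TropModule.one_smul (v i)
  add_smul a b v := funext fun i => TropModule.add_smul a b (v i)
  smul_add a v w := funext fun i => TropModule.smul_add a (v i) (w i)
  zero_smul v := funext fun i => TropModule.zero_smul (v i)
  smul_zero a := funext fun i => TropModule.smul_zero (a := a)

/-! ## Homomorphisms of tropical modules -/

/-- A homomorphism of `k`-modules. -/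
structure TropHom (k : Type*) (M : Type*) (N : Type*) [TropSemifield k] [TropSemigroup M]
    [TropModule k M] [TropSemigroup N] [TropModule k N] where
  toFun : M → N
  map_zero' : toFun 0 = 0
  map_add' : ∀ v w : M, toFun (v + w) = toFun v + toFun w
  map_smul' : ∀ (a : k) (v : M), toFun (a • v) = a • toFun v

namespace TropHom

variable {k M N : Type*} [TropSemifield k] [TropSemigroup M] [TropModule k M]
  [TropSemigroup N] [TropModule k N]

theorem ext' {f g : TropHom k M N} (h : ∀ v, f.toFun v = g.toFun v) : f = g := by
  cases f; cases g
  simp only [mk.injEq]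
  exact funext h

instance : Zero (TropHom k M N) :=
  ⟨⟨fun _ => 0, rfl, fun _ _ => (add_zero (0 : N)).symm,
    fun a _ => (TropModule.smul_zero (M := N) a).symm⟩⟩

instance : Add (TropHom k M N) :=
  ⟨fun f g =>
    { toFun := fun v => f.toFun v + g.toFun v
      map_zero' := by
        show f.toFun 0 + g.toFun 0 = 0
        rw [f.map_zero', g.map_zero', add_zero]
      map_add' := fun v w => by
        show f.toFun (v + w) + g.toFun (v + w) =
          (f.toFun v + g.toFun v) + (f.toFun w + g.toFun w)
        rw [f.map_add', g.map_add', add_add_add_comm]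
      map_smul' := fun a v => by
        show f.toFun (a • v) + g.toFun (a • v) = a • (f.toFun v + g.toFun v)
        rw [f.map_smul', g.map_smul', TropModule.smul_add] }⟩

instance : SMul k (TropHom k M N) :=
  ⟨fun a f =>
    { toFun := fun v => a • f.toFun v
      map_zero' := by
        show a • f.toFun 0 = 0
        rw [f.map_zero', TropModule.smul_zero]
      map_add' := fun v w => by
        show a • f.toFun (v + w) = a • f.toFun v + a • f.toFun w
        rw [f.map_add', TropModule.smul_add]
      map_smul' := fun b v => by
        show a • f.toFun (b • v) = b • (a • f.toFun v)
        rw [f.map_smul', ← TropModule.mul_smul, ← TropModule.mul_smul, mul_comm a b] }⟩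

instance : TropSemigroup (TropHom k M N) where
  add := (· + ·)
  zero := 0
  add_assoc f g h := ext' fun v => add_assoc (f.toFun v) (g.toFun v) (h.toFun v)
  zero_add f := ext' fun v => zero_add (f.toFun v)
  add_zero f := ext' fun v => add_zero (f.toFun v)
  add_comm f g := ext' fun v => add_comm (f.toFun v) (g.toFun v)
  nsmul := nsmulRec
  add_idem f := ext' fun v => TropSemigroup.add_idem (f.toFun v)

instance : TropModule k (TropHom k M N) where
  smul := (· • ·)
  mul_smul a b f := ext' fun v => TropModule.mul_smul a b (f.toFun v)
  one_smul f := ext' fun v => TropModule.one_smul (f.toFun v)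
  add_smul a b f := ext' fun v => TropModule.add_smul a b (f.toFun v)
  smul_add a f g := ext' fun v => TropModule.smul_add a (f.toFun v) (g.toFun v)
  zero_smul f := ext' fun v => TropModule.zero_smul (f.toFun v)
  smul_zero a := ext' fun v => TropModule.smul_zero (M := N) a

end TropHom

/-- The canonical map `M → (M∨)∨`, `v ↦ (ξ ↦ ⟨v, ξ⟩)`. -/
def iotaFun (k : Type*) (M : Type*) [TropSemifield k] [TropSemigroup M] [TropModule k M] :
    M → TropHom k (TropHom k M k) k :=
  fun v => ⟨fun ξ => ξ.toFun v, rfl, fun ξ η => rfl, fun a ξ => rfl⟩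

/-! ## Order-theoretic notions -/

/-- `z` is the infimum of `v` and `w` w.r.t. the canonical order. -/
def IsTInf {M : Type*} [Add M] (v w z : M) : Prop :=
  tle z v ∧ tle z w ∧ ∀ y : M, tle y v → tle y w → tle y z

/-- A tropical module is straight if it is a finitely distributive ordered lattice. -/
def Straight (M : Type*) [Add M] : Prop :=
  (∀ v w : M, ∃ z : M, IsTInf v w z) ∧
    ∀ v₁ v₂ w z₁ z₂ : M, IsTInf v₁ w z₁ → IsTInf v₂ w z₂ → IsTInf (v₁ + v₂) w (z₁ + z₂)

/-- Infimum of `v` and `w` within the subset `N`. -/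
def IsTInfOn {M : Type*} [Add M] (N : Set M) (v w z : M) : Prop :=
  tle z v ∧ tle z w ∧ ∀ y ∈ N, tle y v → tle y w → tle y z

/-- A submodule (viewed as a subset) is straight. -/
def StraightSet {M : Type*} [Add M] (N : Set M) : Prop :=
  (∀ v ∈ N, ∀ w ∈ N, ∃ z ∈ N, IsTInfOn N v w z) ∧
    ∀ v₁ ∈ N, ∀ v₂ ∈ N, ∀ w ∈ N, ∀ z₁ ∈ N, ∀ z₂ ∈ N,
      IsTInfOn N v₁ w z₁ → IsTInfOn N v₂ w z₂ → IsTInfOn N (v₁ + v₂) w (z₁ + z₂)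

/-! ## Generation, bases, extremal elements -/

/-- `S` generates the `k`-module `M`. -/
def TGenerates (k : Type*) {M : Type*} [TropSemifield k] [TropSemigroup M] [TropModule k M]
    (S : Set M) : Prop :=
  ∀ v : M, ∃ (r : ℕ) (a : Fin r → k) (x : Fin r → M), (∀ i, x i ∈ S) ∧ v = ∑ i, a i • x i

/-- `M` is finitely generated. -/
def TFG (k : Type*) (M : Type*) [TropSemifield k] [TropSemigroup M] [TropModule k M] : Prop :=
  ∃ S : Finset M, TGenerates k (↑S : Set M)

/-- A basis: a generating set no proper subset of which generates. -/
def TBasis (k : Type*) {M : Type*} [TropSemifield k] [TropSemigroup M] [TropModule k M]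
    (S : Set M) : Prop :=
  TGenerates k S ∧ ∀ T : Set M, T ⊂ S → ¬ TGenerates k T

/-- `S` generates the subset `N` (viewed as a submodule of `M`). -/
def TGeneratesOn (k : Type*) {M : Type*} [TropSemifield k] [TropSemigroup M] [TropModule k M]
    (N S : Set M) : Prop :=
  ∀ v ∈ N, ∃ (r : ℕ) (a : Fin r → k) (x : Fin r → M), (∀ i, x i ∈ S) ∧ v = ∑ i, a i • x i

/-- A basis of the submodule `N ⊆ M`. -/
def TBasisOn (k : Type*) {M : Type*} [TropSemifield k] [TropSemigroup M] [TropModule k M]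
    (N S : Set M) : Prop :=
  S ⊆ N ∧ TGeneratesOn k N S ∧ ∀ T : Set M, T ⊂ S → ¬ TGeneratesOn k N T

/-- An extremal element. -/
def TExtremal {M : Type*} [Add M] [Zero M] (e : M) : Prop :=
  e ≠ 0 ∧ ∀ v w : M, v + w = e → v = e ∨ w = e

/-- The ray `k ⊙ e` generated by an element. -/
def tray (k : Type*) {M : Type*} [TropSemifield k] [TropSemigroup M] [TropModule k M]
    (e : M) : Set M :=
  Set.range fun a : k => a • e

/-- The set of extremal rays of `M`. -/
def extRays (k : Type*) (M : Type*) [TropSemifield k] [TropSemigroup M] [TropModule k M] :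
    Set (Set M) :=
  {R : Set M | ∃ e : M, TExtremal e ∧ R = tray k e}

/-- The dimension of a straight reflexive module: the number of extremal rays. -/
noncomputable def tdim (k : Type*) (M : Type*) [TropSemifield k] [TropSemigroup M]
    [TropModule k M] : ℕ :=
  (extRays k M).ncard

/-! ## Further notions on homomorphisms -/

/-- A lightly surjective homomorphism. -/
def LightlySurjective {k M N : Type*} [TropSemifield k] [TropSemigroup M] [TropModule k M]
    [TropSemigroup N] [TropModule k N] (α : TropHom k M N) : Prop :=
  ∀ w : N, ∃ v : M, tle w (α.toFun v)

/-- A lattice-preserving homomorphism. -/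
def LatticePreserving {k M N : Type*} [TropSemifield k] [TropSemigroup M] [TropModule k M]
    [TropSemigroup N] [TropModule k N] (α : TropHom k M N) : Prop :=
  ∀ v w : M, ∀ x : N, tle x (α.toFun v) → tle x (α.toFun w) →
    ∃ y : M, tle y v ∧ tle y w ∧ tle x (α.toFun y)

/-- The inclusion of the subset `N` into the ambient module is lattice-preserving. -/
def LatPresSet {M : Type*} [Add M] (N : Set M) : Prop :=
  ∀ v ∈ N, ∀ w ∈ N, ∀ x : M, tle x v → tle x w → ∃ y ∈ N, tle y v ∧ tle y w ∧ tle x y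

/-- `η` is the dual element of `e`: `⟨e,η⟩ = 0` and
`⟨v,η⟩ ⊙ ⟨e,ξ⟩ ≤ ⟨v,ξ⟩` for all `v`, `ξ`. -/
def IsDualElement {k M : Type*} [TropSemifield k] [TropSemigroup M] [TropModule k M]
    (e : M) (η : TropHom k M k) : Prop :=
  η.toFun e = 1 ∧ ∀ (v : M) (ξ : TropHom k M k), tle (η.toFun v * ξ.toFun e) (ξ.toFun v)

/-! ## Locators -/

/-- A locator of `M`: a lower-saturated subsemigroup of `(M, ⊕)` that generates `M`. -/
structure IsLocator (k : Type*) {M : Type*} [TropSemifield k] [TropSemigroup M] [TropModule k M]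
    (S : Set M) : Prop where
  lower : ∀ v w : M, tle v w → w ∈ S → v ∈ S
  add_mem : ∀ v ∈ S, ∀ w ∈ S, v + w ∈ S
  generates : TGenerates k S

/-- The multiplicative inverse `⊘a` (junk value `−∞` at `−∞`). -/
noncomputable def tinv {k : Type*} [TropSemifield k] (a : k) : k := by
  classical exact if h : a = 0 then 0 else Classical.choose (TropSemifield.exists_inv a h)

/-- Scalar multiplication on locators: `a ⊙̌ S = (⊘a) ⊙ S` for `a ≠ −∞`, `(−∞) ⊙̌ S = M`. -/
noncomputable def locSMul {k M : Type*} [TropSemifield k] [TropSemigroup M] [TropModule k M]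
    (a : k) (S : Set M) : Set M := by
  classical exact if a = 0 then Set.univ else (fun v => tinv a • v) '' S

/-- `U` is the infimum of the locators `S`, `T` in `Loc(M)` (whose canonical
order is reverse inclusion, the sum being intersection). -/
def IsLocInf (k : Type*) {M : Type*} [TropSemifield k] [TropSemigroup M] [TropModule k M]
    (S T U : Set M) : Prop :=
  IsLocator k U ∧ S ⊆ U ∧ T ⊆ U ∧
    ∀ W : Set M, IsLocator k W → S ⊆ W → T ⊆ W → U ⊆ W

/-! ## Submodules -/

/-- A subset of a `k`-module which is a submodule. -/
structure IsTSubmodule (k : Type*) {M : Type*} [TropSemifield k] [TropSemigroup M]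
    [TropModule k M] (N : Set M) : Prop where
  zero_mem : (0 : M) ∈ N
  add_mem : ∀ v ∈ N, ∀ w ∈ N, v + w ∈ N
  smul_mem : ∀ (a : k), ∀ v ∈ N, a • v ∈ N

/-- A bundled submodule of a `k`-module. -/
structure TSub (k : Type*) (M : Type*) [TropSemifield k] [TropSemigroup M] [TropModule k M] where
  carrier : Set M
  zero_mem : (0 : M) ∈ carrier
  add_mem : ∀ v ∈ carrier, ∀ w ∈ carrier, v + w ∈ carrier
  smul_mem : ∀ (a : k), ∀ v ∈ carrier, a • v ∈ carrier

instance TSub.instZero {k M : Type*} [TropSemifield k] [TropSemigroup M] [TropModule k M]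
    (N : TSub k M) : Zero ↥N.carrier :=
  ⟨⟨0, N.zero_mem⟩⟩

instance TSub.instAdd {k M : Type*} [TropSemifield k] [TropSemigroup M] [TropModule k M]
    (N : TSub k M) : Add ↥N.carrier :=
  ⟨fun v w => ⟨v.1 + w.1, N.add_mem v.1 v.2 w.1 w.2⟩⟩

instance TSub.instSMul {k M : Type*} [TropSemifield k] [TropSemigroup M] [TropModule k M]
    (N : TSub k M) : SMul k ↥N.carrier :=
  ⟨fun a v => ⟨a • v.1, N.smul_mem a v.1 v.2⟩⟩

instance TSub.semigroup {k M : Type*} [TropSemifield k] [TropSemigroup M] [TropModule k M]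
    (N : TSub k M) : TropSemigroup ↥N.carrier where
  add := (· + ·)
  zero := 0
  add_assoc a b c := Subtype.ext (add_assoc a.1 b.1 c.1)
  zero_add a := Subtype.ext (zero_add a.1)
  add_zero a := Subtype.ext (add_zero a.1)
  add_comm a b := Subtype.ext (add_comm a.1 b.1)
  nsmul := nsmulRec
  add_idem a := Subtype.ext (TropSemigroup.add_idem a.1)

instance TSub.module {k M : Type*} [TropSemifield k] [TropSemigroup M] [TropModule k M]
    (N : TSub k M) : TropModule k ↥N.carrier where
  smul := (· • ·)
  mul_smul a b v := Subtype.ext (TropModule.mul_smul a b v.1)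
  one_smul v := Subtype.ext (TropModule.one_smul v.1)
  add_smul a b v := Subtype.ext (TropModule.add_smul a b v.1)
  smul_add a v w := Subtype.ext (TropModule.smul_add a v.1 w.1)
  zero_smul v := Subtype.ext (TropModule.zero_smul v.1)
  smul_zero a := Subtype.ext (TropModule.smul_zero (M := M) a)

/-! ## Linear combinations -/

theorem tsmul_sum {k M : Type*} [TropSemifield k] [TropSemigroup M] [TropModule k M]
    (a : k) {ι : Type*} (s : Finset ι) (f : ι → M) :
    a • (∑ i ∈ s, f i) = ∑ i ∈ s, a • f i := by
  classical
  induction s using Finset.induction_on with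
  | empty => simpa using TropModule.smul_zero (M := M) a
  | insert _ _ h ih => rw [Finset.sum_insert h, Finset.sum_insert h, TropModule.smul_add, ih]

/-- The homomorphism `kⁿ → M` sending the `i`-th standard basis element to `e i`. -/
def linComb {k M : Type*} [TropSemifield k] [TropSemigroup M] [TropModule k M] {n : ℕ}
    (e : Fin n → M) : TropHom k (Fin n → k) M where
  toFun v := ∑ i, v i • e i
  map_zero' :=
    (Finset.sum_congr rfl fun i _ => TropModule.zero_smul (e i)).trans Finset.sum_const_zero
  map_add' v w := by
    rw [← Finset.sum_add_distrib]
    exact Finset.sum_congr rfl fun i _ => TropModule.add_smul (v i) (w i) (e i)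
  map_smul' a v := by
    rw [tsmul_sum]
    exact Finset.sum_congr rfl fun i _ => TropModule.mul_smul a (v i) (e i)

/-- The homomorphism `M → kⁿ` induced by an `n`-tuple of elements of `M∨`. -/
def dualTuple {k M : Type*} [TropSemifield k] [TropSemigroup M] [TropModule k M] {n : ℕ}
    (η : Fin n → TropHom k M k) : TropHom k M (Fin n → k) where
  toFun v := fun i => (η i).toFun v
  map_zero' := funext fun i => (η i).map_zero'
  map_add' v w := funext fun i => (η i).map_add' v w
  map_smul' a v := funext fun i => (η i).map_smul' a v

section Stmt18Aux

variable {k : Type*} [TropSemifield k]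

lemma t_idem (a : k) : a + a = a := TropSemifield.add_idem a

lemma tle_refl' (a : k) : tle a a := t_idem a

lemma tle_trans' {a b c : k} (h1 : tle a b) (h2 : tle b c) : tle a c := by
  unfold tle at *
  rw [← h2, ← add_assoc, h1]

lemma tle_antisymm' {a b : k} (h1 : tle a b) (h2 : tle b a) : a = b := by
  unfold tle at *
  conv_lhs => rw [← h2]
  rw [add_comm]
  exact h1

lemma tle_mul_left' {a b : k} (c : k) (h : tle a b) : tle (c * a) (c * b) := by
  unfold tle at *
  rw [← mul_add, h]

lemma tle_mul_right' {a b : k} (c : k) (h : tle a b) : tle (a * c) (b * c) := by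
  unfold tle at *
  rw [← add_mul, h]

lemma tle_mul' {a b c d : k} (h1 : tle a b) (h2 : tle c d) : tle (a * c) (b * d) :=
  tle_trans' (tle_mul_right' c h1) (tle_mul_left' b h2)

lemma term_tle_sum {ι : Type*} [DecidableEq ι] (s : Finset ι) (f : ι → k) {x : ι}
    (hx : x ∈ s) : tle (f x) (∑ i ∈ s, f i) := by
  unfold tle
  rw [← Finset.add_sum_erase s f hx, ← add_assoc, t_idem]

lemma sum_tle {ι : Type*} (s : Finset ι) (f : ι → k) {c : k}
    (h : ∀ i ∈ s, tle (f i) c) : tle (∑ i ∈ s, f i) c := by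
  classical
  induction s using Finset.induction_on with
  | empty => simpa [tle] using zero_add c
  | @insert x s hxs ih =>
      rw [Finset.sum_insert hxs]
      unfold tle at *
      rw [add_assoc, ih (fun i hi => h i (Finset.mem_insert_of_mem hi)),
        h x (Finset.mem_insert_self x s)]

variable {n : ℕ}

/-- Weight of the walk `p a → p (a+1) → ⋯ → p b`. -/
def Wk (A : Matrix (Fin n) (Fin n) k) (p : ℕ → Fin n) (a b : ℕ) : k :=
  ∏ u ∈ Finset.range (b - a), A (p (a + u)) (p (a + u + 1))

lemma Wk_split (A : Matrix (Fin n) (Fin n) k) (p : ℕ → Fin n) {a c b : ℕ}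
    (h1 : a ≤ c) (h2 : c ≤ b) :
    Wk A p a b = Wk A p a c * Wk A p c b := by
  unfold Wk
  rw [show b - a = (c - a) + (b - c) by omega, Finset.prod_range_add]
  congr 1
  exact Finset.prod_congr rfl fun u _ => by
    rw [show a + (c - a + u) = c + u by omega, show c + u + 1 = c + u + 1 from rfl]

/-- Splicing out the segment `(s, s+d]` of a walk. -/
def splice (p : ℕ → Fin n) (s d : ℕ) : ℕ → Fin n :=
  fun u => if u ≤ s then p u else p (u + d)

lemma splice_left (p : ℕ → Fin n) {s d u : ℕ} (h : u ≤ s) : splice p s d u = p u :=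
  if_pos h

lemma splice_endpoint (p : ℕ → Fin n) {s t b : ℕ} (hst : s < t) (htb : t ≤ b)
    (hp : p s = p t) : splice p s (t - s) (b - (t - s)) = p b := by
  unfold splice
  rcases eq_or_lt_of_le htb with h | h
  · subst h
    rw [show t - (t - s) = s by omega, if_pos (le_refl s), hp]
  · rw [if_neg (show ¬ b - (t - s) ≤ s by omega),
      show b - (t - s) + (t - s) = b by omega]

lemma Wk_splice (A : Matrix (Fin n) (Fin n) k) (p : ℕ → Fin n) {a s t b : ℕ}
    (has : a ≤ s) (hst : s < t) (htb : t ≤ b) (hp : p s = p t) :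
    Wk A p a b = Wk A (splice p s (t - s)) a (b - (t - s)) * Wk A p s t := by
  set d := t - s with hd
  set q := splice p s d with hq
  have hq1 : Wk A q a s = Wk A p a s := by
    unfold Wk
    exact Finset.prod_congr rfl fun u hu => by
      have hu' := Finset.mem_range.mp hu
      rw [show q (a + u) = p (a + u) from if_pos (by omega),
        show q (a + u + 1) = p (a + u + 1) from if_pos (by omega)]
  have hq2 : Wk A q s (b - d) = Wk A p t b := by
    unfold Wk
    rw [show b - d - s = b - t by omega]
    refine Finset.prod_congr rfl fun u hu => ?_
    have hu' := Finset.mem_range.mp hu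
    have e2 : q (s + u + 1) = p (t + u + 1) :=
      (if_neg (by omega)).trans (by rw [show s + u + 1 + d = t + u + 1 by omega])
    rcases Nat.eq_zero_or_pos u with h0 | h0
    · subst h0
      rw [show q (s + 0) = p s from if_pos (by omega), hp, e2,
        show t + 0 = t by omega]
    · rw [show q (s + u) = p (s + u + d) from if_neg (by omega),
        show s + u + d = t + u by omega, e2]
  rw [Wk_split A p (c := s) (b := b) has (by omega),
    Wk_split A p (c := t) (b := b) (le_of_lt hst) htb,
    Wk_split A q (c := s) (b := b - d) has (by omega), hq1, hq2]
  ring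

variable (A : Matrix (Fin n) (Fin n) k)

/-- Any (simple) cycle weight is at most `1`. -/
lemma cycle_tle_one (hdiag : ∀ i, A i i = 1)
    (hdet : (∑ s : Equiv.Perm (Fin n), ∏ i, A i (s i)) = 1)
    {m : ℕ} (v : Fin m → Fin n) (hv : Function.Injective v) :
    tle (∏ t, A (v t) (v (finRotate m t))) 1 := by
  classical
  rcases Nat.eq_zero_or_pos m with h0 | h0
  · subst h0
    simpa using tle_refl' (1 : k)
  obtain ⟨m', rfl⟩ : ∃ m', m = m' + 1 := ⟨m - 1, by omega⟩
  set f : Fin (m' + 1) ↪ Fin n := ⟨v, hv⟩ with hf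
  set s : Equiv.Perm (Fin n) := (finRotate (m' + 1)).viaFintypeEmbedding f with hs
  have key : ∏ i, A i (s i) = ∏ t, A (v t) (v (finRotate (m' + 1) t)) := by
    rw [← Finset.prod_mul_prod_compl (Finset.univ.map f) (fun i => A i (s i))]
    have h2 : ∏ i ∈ (Finset.univ.map f)ᶜ, A i (s i) = 1 := by
      refine Finset.prod_eq_one fun i hi => ?_
      have hi' : i ∉ Set.range f := by
        simp only [Finset.mem_compl, Finset.mem_map] at hi
        rintro ⟨a, rfl⟩
        exact hi ⟨a, Finset.mem_univ a, rfl⟩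
      rw [Equiv.Perm.viaFintypeEmbedding_apply_notMem_range _ _ hi', hdiag]
    rw [h2, mul_one, Finset.prod_map]
    refine Finset.prod_congr rfl fun t _ => congrArg (A (v t)) ?_
    show s (f t) = v (finRotate (m' + 1) t)
    rw [hs, Equiv.Perm.viaFintypeEmbedding_apply_image]
    rfl
  have h := term_tle_sum Finset.univ (fun s : Equiv.Perm (Fin n) => ∏ i, A i (s i))
    (Finset.mem_univ s)
  rw [hdet] at h
  rw [← key]
  exact h

/-- Any closed walk weight is at most `1`. -/
lemma closed_tle_one (hdiag : ∀ i, A i i = 1)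
    (hdet : (∑ s : Equiv.Perm (Fin n), ∏ i, A i (s i)) = 1) :
    ∀ m : ℕ, ∀ p : ℕ → Fin n, ∀ a : ℕ, p a = p (a + m) →
      tle (Wk A p a (a + m)) 1 := by
  intro m
  induction m using Nat.strong_induction_on with
  | _ m ih =>
  intro p a hpa
  by_cases hex : ∃ st : ℕ × ℕ, a ≤ st.1 ∧ st.1 < st.2 ∧ st.2 < a + m ∧ p st.1 = p st.2
  · obtain ⟨⟨s, t⟩, has, hst, htb, hp⟩ := hex
    set d := t - s with hd
    have hd1 : 1 ≤ d := by omega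
    have hdm : d < m := by omega
    have hinner : tle (Wk A p s t) 1 := by
      have := ih d hdm p s (by rw [show s + d = t by omega]; exact hp)
      rwa [show s + d = t by omega] at this
    have houter : tle (Wk A (splice p s d) a (a + m - d)) 1 := by
      have hq0 : splice p s d a = p a := splice_left p has
      have hq1 : splice p s d (a + m - d) = p (a + m) :=
        splice_endpoint p hst (by omega) hp
      have := ih (m - d) (by omega) (splice p s d) a
        (by rw [show a + (m - d) = a + m - d by omega, hq0, hq1]; exact hpa)
      rwa [show a + (m - d) = a + m - d by omega] at this
    have hsplit := Wk_splice A p has hst (show t ≤ a + m by omega) hp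
    rw [hsplit, show a + m - (t - s) = a + m - d by omega]
    have := tle_mul' houter hinner
    rwa [one_mul] at this
  · push_neg at hex
    rcases Nat.eq_zero_or_pos m with h0 | h0
    · subst h0
      simpa [Wk] using tle_refl' (1 : k)
    set v : Fin m → Fin n := fun t => p (a + t.val) with hv
    have hvinj : Function.Injective v := by
      intro t1 t2 h
      by_contra hne
      rcases lt_or_gt_of_ne (fun h' : t1.val = t2.val => hne (Fin.ext h')) with hlt | hlt
      · exact absurd h (hex (a + t1.val, a + t2.val) (by omega) (by omega)
          (by have := t2.isLt; omega))
      · exact absurd h.symm (hex (a + t2.val, a + t1.val) (by omega) (by omega)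
          (by have := t1.isLt; omega))
    have hW : Wk A p a (a + m) = ∏ t, A (v t) (v (finRotate m t)) := by
      unfold Wk
      rw [show a + m - a = m by omega, ← Fin.prod_univ_eq_prod_range]
      refine Finset.prod_congr rfl fun t _ => ?_
      obtain ⟨m', rfl⟩ : ∃ m', m = m' + 1 := ⟨m - 1, by omega⟩
      rw [finRotate_succ_apply]
      congr 1
      show p (a + t.val + 1) = p (a + ((t + 1 : Fin (m' + 1)) : ℕ))
      rcases Nat.lt_or_ge (t.val + 1) (m' + 1) with hlt | hge
      · rw [Fin.val_add_one_of_lt (by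
          rw [Fin.lt_iff_val_lt_val, Fin.val_last]; omega), show a + t.val + 1 = a + (t.val + 1) by omega]
      · have ht : t.val = m' := by have := t.isLt; omega
        have hlast : t = Fin.last m' := Fin.ext (by simpa using ht)
        rw [hlast, Fin.last_add_one, Fin.val_zero, Nat.add_zero,
          show a + (Fin.last m').val + 1 = a + (m' + 1) by simp [Fin.val_last]; omega]
        exact hpa.symm
    rw [hW]
    exact cycle_tle_one A hdiag hdet v hvinj

lemma one_add_eq (hdiag : ∀ i, A i i = 1) : (1 : Matrix (Fin n) (Fin n) k) + A = A := by
  ext i j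
  by_cases h : i = j
  · subst h
    rw [Matrix.add_apply, Matrix.one_apply_eq, hdiag, t_idem]
  · rw [Matrix.add_apply, Matrix.one_apply_ne h, zero_add]

lemma pow_step (hdiag : ∀ i, A i i = 1) (m : ℕ) :
    A ^ m + A ^ (m + 1) = A ^ (m + 1) := by
  calc A ^ m + A ^ (m + 1) = A ^ m * (1 + A) := by rw [mul_add, mul_one, pow_succ]
  _ = A ^ (m + 1) := by rw [one_add_eq A hdiag, pow_succ]

lemma pow_mono (hdiag : ∀ i, A i i = 1) {a b : ℕ} (hab : a ≤ b) (i j : Fin n) :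
    tle ((A ^ a) i j) ((A ^ b) i j) := by
  induction b, hab using Nat.le_induction with
  | base => exact tle_refl' _
  | succ b hab ih =>
      refine tle_trans' ih ?_
      have h := congrFun (congrFun (pow_step A hdiag b) i) j
      exact h

/-- Vertices of a walk `i → p 0 → ⋯ → p (m-1) → j`. -/
def vtx (i j : Fin n) (m : ℕ) (p : Fin m → Fin n) : ℕ → Fin n :=
  fun t => if h0 : t = 0 then i else if h : t ≤ m then p ⟨t - 1, by omega⟩ else j

lemma vtx_cons (i j l : Fin n) (m : ℕ) (p : Fin m → Fin n) (u : ℕ) :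
    vtx i j (m + 1) (Fin.cons l p) (u + 1) = vtx l j m p u := by
  unfold vtx
  rcases Nat.eq_zero_or_pos u with h0 | h0
  · subst h0
    simp
  rw [dif_neg (show ¬ u + 1 = 0 by omega), dif_neg (show ¬ u = 0 by omega)]
  rcases Nat.lt_or_ge u (m + 1) with hlt | hge
  · rw [dif_pos (show u + 1 ≤ m + 1 by omega), dif_pos (show u ≤ m by omega)]
    obtain ⟨u', rfl⟩ : ∃ u', u = u' + 1 := ⟨u - 1, by omega⟩
    have h : (⟨u' + 1 + 1 - 1, by omega⟩ : Fin (m + 1)) = Fin.succ ⟨u' + 1 - 1, by omega⟩ := rfl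
    rw [h, Fin.cons_succ]
  · rw [dif_neg (show ¬ u + 1 ≤ m + 1 by omega), dif_neg (show ¬ u ≤ m by omega)]

lemma pow_eq_sum (m : ℕ) (i j : Fin n) :
    (A ^ (m + 1)) i j = ∑ p : Fin m → Fin n, Wk A (vtx i j m p) 0 (m + 1) := by
  classical
  induction m generalizing i with
  | zero =>
      rw [pow_one, Fintype.sum_unique]
      simp [Wk, vtx]
  | succ m ihm =>
      have step : ∀ (l : Fin n) (p : Fin m → Fin n),
          A i l * Wk A (vtx l j m p) 0 (m + 1)
            = Wk A (vtx i j (m + 1) (Fin.cons l p)) 0 (m + 2) := by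
        intro l p
        unfold Wk
        simp only [Nat.sub_zero, Nat.zero_add]
        rw [Finset.prod_range_succ'
          (fun u => A (vtx i j (m + 1) (Fin.cons l p) u) (vtx i j (m + 1) (Fin.cons l p) (u + 1)))
          (m + 1)]
        have hcongr : (∏ u ∈ Finset.range (m + 1),
            A (vtx i j (m + 1) (Fin.cons l p) (u + 1)) (vtx i j (m + 1) (Fin.cons l p) (u + 1 + 1)))
            = ∏ u ∈ Finset.range (m + 1), A (vtx l j m p u) (vtx l j m p (u + 1)) :=
          Finset.prod_congr rfl fun u _ => by rw [vtx_cons, vtx_cons]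
        have h0 : vtx i j (m + 1) (Fin.cons l p) 0 = i := by simp [vtx]
        have h1 : vtx i j (m + 1) (Fin.cons l p) (0 + 1) = l := by
          rw [vtx_cons]; simp [vtx]
        rw [hcongr, h0, h1, mul_comm]
      rw [pow_succ', Matrix.mul_apply]
      have hrhs : ∀ l : Fin n, (A ^ (m + 1)) l j = ∑ p : Fin m → Fin n,
          Wk A (vtx l j m p) 0 (m + 1) := fun l => ihm l
      calc (∑ l, A i l * (A ^ (m + 1)) l j)
          = ∑ l, ∑ p : Fin m → Fin n, A i l * Wk A (vtx l j m p) 0 (m + 1) := by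
            exact Finset.sum_congr rfl fun l _ => by rw [hrhs l, Finset.mul_sum]
        _ = ∑ x : Fin n × (Fin m → Fin n),
              Wk A (vtx i j (m + 1) (Fin.cons x.1 x.2)) 0 (m + 2) := by
            rw [Fintype.sum_prod_type]
            exact Finset.sum_congr rfl fun l _ =>
              Finset.sum_congr rfl fun p _ => step l p
        _ = ∑ q : Fin (m + 1) → Fin n, Wk A (vtx i j (m + 1) q) 0 (m + 2) := by
            exact Fintype.sum_equiv (Fin.consEquiv fun _ => Fin n)
              _ _ (fun x => rfl)

lemma walk_tle (hdiag : ∀ i, A i i = 1)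
    (hdet : (∑ s : Equiv.Perm (Fin n), ∏ i, A i (s i)) = 1)
    {i j : Fin n} {M : ℕ} (q : ℕ → Fin n) (hq0 : q 0 = i) (hqM : q M = j)
    (hMn : M + 1 ≤ n) : tle (Wk A q 0 M) ((A ^ (n - 1)) i j) := by
  classical
  rcases Nat.eq_zero_or_pos M with h0 | h0
  · have hij : i = j := by rw [← hq0, ← hqM, h0]
    subst hij
    have h1 : Wk A q 0 M = 1 := by rw [h0]; simp [Wk]
    rw [h1]
    have h2 : tle ((A ^ 0) i i) ((A ^ (n - 1)) i i) :=
      pow_mono A hdiag (Nat.zero_le _) i i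
    rwa [pow_zero, Matrix.one_apply_eq] at h2
  · obtain ⟨m, rfl⟩ : ∃ m, M = m + 1 := ⟨M - 1, by omega⟩
    set p' : Fin m → Fin n := fun u => q (u.val + 1) with hp'
    have hw : ∀ u, u ≤ m + 1 → vtx i j m p' u = q u := by
      intro u hu
      unfold vtx
      split_ifs with h1 h2
      · subst h1; exact hq0.symm
      · show p' ⟨u - 1, by omega⟩ = q u
        simp only [hp']
        congr 1
        omega
      · have : u = m + 1 := by omega
        subst this
        exact hqM.symm
    have hterm : Wk A (vtx i j m p') 0 (m + 1) = Wk A q 0 (m + 1) := by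
      unfold Wk
      refine Finset.prod_congr rfl fun u hu => ?_
      have hu' := Finset.mem_range.mp hu
      rw [show (0:ℕ) + u = u by omega, hw u (by omega), hw (u + 1) (by omega)]
    have h1 := term_tle_sum Finset.univ
      (fun p : Fin m → Fin n => Wk A (vtx i j m p) 0 (m + 1)) (Finset.mem_univ p')
    rw [← pow_eq_sum A m i j] at h1
    rw [← hterm]
    exact tle_trans' h1 (pow_mono A hdiag (show m + 1 ≤ n - 1 by omega) i j)

end Stmt18Aux

theorem stmt18 {k : Type*} [TropSemifield k]
    (hto : TotallyOrderedTSF k) (hrat : RationalTSF k)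
    {n : ℕ} (A : Matrix (Fin n) (Fin n) k)
    (hdiag : ∀ i, A i i = 1)
    (hdet : (∑ s : Equiv.Perm (Fin n), ∏ i, A i (s i)) = 1) :
    A ^ n = A ^ (n - 1) := by
  classical
  rcases n with _ | n'
  · rfl
  show A ^ (n' + 1) = A ^ n'
  ext i j
  refine tle_antisymm' ?_ (pow_mono A hdiag (Nat.le_succ n') i j)
  rw [pow_eq_sum A n' i j]
  refine sum_tle _ _ fun p _ => ?_
  set v : ℕ → Fin (n' + 1) := vtx i j n' p with hv
  have hv0 : v 0 = i := by simp [hv, vtx]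
  have hvN : v (n' + 1) = j := by
    rw [hv]; unfold vtx; rw [dif_neg (by omega), dif_neg (by omega)]
  obtain ⟨a, b, hab, heq⟩ := Fintype.exists_ne_map_eq_of_card_lt
    (fun t : Fin (n' + 2) => v t.val) (by simp)
  obtain ⟨s, t, hst, htN, hvst⟩ : ∃ s t : ℕ, s < t ∧ t ≤ n' + 1 ∧ v s = v t := by
    rcases lt_or_gt_of_ne (fun h : a.val = b.val => hab (Fin.ext h)) with h | h
    · exact ⟨a.val, b.val, h, by omega, heq⟩
    · exact ⟨b.val, a.val, h, by omega, heq.symm⟩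
  have hinner : tle (Wk A v s t) 1 := by
    have h := closed_tle_one A hdiag hdet (t - s) v s
      (by rw [show s + (t - s) = t by omega]; exact hvst)
    rwa [show s + (t - s) = t by omega] at h
  have hsplit := Wk_splice A v (Nat.zero_le s) hst htN hvst
  have houter : tle (Wk A (splice v s (t - s)) 0 (n' + 1 - (t - s)))
      ((A ^ n') i j) := by
    have h := walk_tle A hdiag hdet (splice v s (t - s))
      ((splice_left v (Nat.zero_le s)).trans hv0)
      ((splice_endpoint v hst htN hvst).trans hvN)
      (show (n' + 1 - (t - s)) + 1 ≤ n' + 1 by omega)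
    simpa using h
  rw [hsplit]
  have h := tle_mul' houter hinner
  rwa [mul_one] at h
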